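/- arXiv:1309.5925 — 3 statements merged into one kernel-verified Lean document; each statement's English description precedes it below -/
import Mathlib

section
/- Assume for all i, j that A⁺ i j = ⊥ or A⁻ i j = ⊥, and for all i that b⁺ i = ⊥ or b⁻ i = ⊥. Then there exist 𝐀 : Matrix (Fin m) (Fin n) K, 𝐛 : Fin m → K and 𝐜 : Fin n → K such that: (sign/valuation conditions) for all i, j, if A⁺ i j ≠ ⊥ then 𝐀 i j is positive with val (𝐀 i j) = A⁺ i j, if A⁻ i j ≠ ⊥ then 𝐀 i j is negative with val (𝐀 i j) = A⁻ i j, and if A⁺ i j = A⁻ i j = ⊥ then 𝐀 i j = 0 (analogously for 𝐛 relative to b⁺, b⁻), each 𝐜 j is nonnegative with val (𝐜 j) = c j; and, writing 𝓟 := { 𝐱 : Fin n → K | (∀ j, 𝐱 j ≥ 0) ∧ ∀ i, Σ_j (𝐀 i j · 𝐱 j) + 𝐛 i ≥ 0 }, one has: (a) { (fun j => val (𝐱 j)) | 𝐱 ∈ 𝓟 } = P(A, b); (b) if 𝐱* ∈ 𝓟 satisfies Σ_j 𝐜 j · 𝐱* j ≤ Σ_j 𝐜 j · 𝐲 j for all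 𝐲 ∈ 𝓟, then for all x ∈ P(A, b), ⊔_j (c j + val (𝐱* j)) ≤ ⊔_j (c j + x j). -/
noncomputable section
open scoped Classical
open Finset

/-- The valuation `val : HahnSeries ℝ ℝ → WithBot ℝ`, with `val 𝐱 = -𝐱.order` for `𝐱 ≠ 0`
and `val 0 = ⊥`. -/
def hahnVal (x : HahnSeries ℝ ℝ) : WithBot ℝ :=
  if x = 0 then ⊥ else ↑(-x.order)

/-- A Hahn series is positive when it is nonzero with positive leading coefficient. -/
def HahnPos (x : HahnSeries ℝ ℝ) : Prop :=
  x ≠ 0 ∧ 0 < x.coeff x.order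

/-- A Hahn series is negative when it is nonzero with negative leading coefficient. -/
def HahnNeg (x : HahnSeries ℝ ℝ) : Prop :=
  x ≠ 0 ∧ x.coeff x.order < 0

/-- A Hahn series is nonnegative when it is zero or positive. -/
def HahnNonneg (x : HahnSeries ℝ ℝ) : Prop :=
  x = 0 ∨ 0 < x.coeff x.order

/-- `𝐱 ≥ 𝐲` iff `𝐱 - 𝐲` is nonnegative. -/
def HahnGe (x y : HahnSeries ℝ ℝ) : Prop :=
  HahnNonneg (x - y)

/-- The tropical polyhedron `P(A, b)` over `WithBot ℝ`, given the signed data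
`A⁺, A⁻, b⁺, b⁻`. -/
def tropPolyhedron {m n : ℕ} (Ap An : Matrix (Fin m) (Fin n) (WithBot ℝ))
    (bp bn : Fin m → WithBot ℝ) : Set (Fin n → WithBot ℝ) :=
  {x | ∀ i, (univ.sup fun j => An i j + x j) ⊔ bn i ≤ (univ.sup fun j => Ap i j + x j) ⊔ bp i}

namespace TropLift

abbrev K := HahnSeries ℝ ℝ

lemma hahnVal_zero : hahnVal (0 : K) = ⊥ := if_pos rfl

lemma hahnVal_of_ne {x : K} (hx : x ≠ 0) : hahnVal x = ↑(-x.order) := if_neg hx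

lemma hahnVal_eq_bot_iff {x : K} : hahnVal x = ⊥ ↔ x = 0 := by
  constructor
  · intro h
    by_contra hx
    rw [hahnVal_of_ne hx] at h
    exact WithBot.coe_ne_bot h
  · intro h; rw [h]; exact hahnVal_zero

lemma coeff_zero_of_val_lt {x : K} {g : ℝ} (h : hahnVal x < ↑(-g)) : x.coeff g = 0 := by
  by_cases hx : x = 0
  · simp [hx]
  · rw [hahnVal_of_ne hx, WithBot.coe_lt_coe] at h
    exact HahnSeries.coeff_eq_zero_of_lt_order (by linarith)

lemma coeff_nonneg_of {x : K} (hx : HahnNonneg x) {g : ℝ} (h : hahnVal x ≤ ↑(-g)) :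
    0 ≤ x.coeff g := by
  rcases lt_or_eq_of_le h with h | h
  · rw [coeff_zero_of_val_lt h]
  · by_cases hx0 : x = 0
    · simp [hx0]
    · rw [hahnVal_of_ne hx0, WithBot.coe_inj] at h
      have horder : x.order = g := by linarith [neg_injective h]
      rcases hx with h0 | hpos
      · exact absurd h0 hx0
      · rw [← horder]; exact le_of_lt hpos

lemma order_eq_of {x : K} {g : ℝ} (h0 : x.coeff g ≠ 0) (h1 : ∀ g' < g, x.coeff g' = 0) :
    x.order = g := by
  have hx : x ≠ 0 := HahnSeries.ne_zero_of_coeff_ne_zero h0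
  refine le_antisymm (HahnSeries.order_le_of_coeff_ne_zero h0) ?_
  by_contra hlt
  push_neg at hlt
  exact hx (HahnSeries.coeff_order_eq_zero.mp (h1 _ hlt))

lemma pos_of_coeff {x : K} {g : ℝ} (h1 : ∀ g' < g, x.coeff g' = 0) (h2 : 0 < x.coeff g) :
    HahnPos x ∧ hahnVal x = ↑(-g) := by
  have hx : x ≠ 0 := HahnSeries.ne_zero_of_coeff_ne_zero (ne_of_gt h2)
  have ho : x.order = g := order_eq_of (ne_of_gt h2) h1
  exact ⟨⟨hx, by rw [ho]; exact h2⟩, by rw [hahnVal_of_ne hx, ho]⟩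

lemma neg_of_coeff {x : K} {g : ℝ} (h1 : ∀ g' < g, x.coeff g' = 0) (h2 : x.coeff g < 0) :
    HahnNeg x ∧ hahnVal x = ↑(-g) := by
  have hx : x ≠ 0 := HahnSeries.ne_zero_of_coeff_ne_zero (ne_of_lt h2)
  have ho : x.order = g := order_eq_of (ne_of_lt h2) h1
  exact ⟨⟨hx, by rw [ho]; exact h2⟩, by rw [hahnVal_of_ne hx, ho]⟩

lemma not_nonneg_of_neg {x : K} (h : HahnNeg x) : ¬ HahnNonneg x := by
  rintro (h0 | hpos)
  · exact h.1 h0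
  · exact absurd hpos (not_lt.mpr (le_of_lt h.2))

lemma nonneg_of_pos {x : K} (h : HahnPos x) : HahnNonneg x := Or.inr h.2

lemma pos_of_nonneg_ne {x : K} (h : HahnNonneg x) (hx : x ≠ 0) : HahnPos x := by
  rcases h with h0 | hpos
  · exact absurd h0 hx
  · exact ⟨hx, hpos⟩

lemma sum_coeff {ι : Type*} (s : Finset ι) (f : ι → K) (g : ℝ) :
    (∑ k ∈ s, f k).coeff g = ∑ k ∈ s, (f k).coeff g :=
  map_sum (HahnSeries.coeff.addMonoidHom g) f s

lemma order_of_val {x : K} {v : ℝ} (h : hahnVal x = ↑v) : x ≠ 0 ∧ x.order = -v := by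
  have hx : x ≠ 0 := by
    intro h0; rw [h0, hahnVal_zero] at h; exact WithBot.bot_ne_coe h
  rw [hahnVal_of_ne hx] at h
  have := WithBot.coe_inj.mp h
  exact ⟨hx, by linarith⟩

/-- Lemma A: a finite sum of nonnegative Hahn series is nonnegative with
valuation the max of the valuations. -/
lemma sum_nonneg_val {ι : Type*} (s : Finset ι) (f : ι → K)
    (h : ∀ k ∈ s, HahnNonneg (f k)) :
    HahnNonneg (∑ k ∈ s, f k) ∧ hahnVal (∑ k ∈ s, f k) = s.sup fun k => hahnVal (f k) := by
  by_cases hVb : (s.sup fun k => hahnVal (f k)) = ⊥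
  · have hz : ∀ k ∈ s, f k = 0 := by
      intro k hk
      have := Finset.le_sup (f := fun k => hahnVal (f k)) hk
      rw [hVb, le_bot_iff, hahnVal_eq_bot_iff] at this
      exact this
    rw [Finset.sum_eq_zero hz, hVb]
    exact ⟨Or.inl rfl, hahnVal_zero⟩
  · obtain ⟨v, hV⟩ := WithBot.ne_bot_iff_exists.mp hVb
    have hne : s.Nonempty := by
      rcases Finset.eq_empty_or_nonempty s with rfl | hne
      · simp at hVb
      · exact hne
    obtain ⟨k0, hk0, hk0v⟩ := Finset.exists_mem_eq_sup s hne fun k => hahnVal (f k)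
    have hle : ∀ k ∈ s, hahnVal (f k) ≤ ↑v := by
      intro k hk
      have := Finset.le_sup (f := fun k => hahnVal (f k)) hk
      rwa [← hV] at this
    have hbelow : ∀ g' < -v, (∑ k ∈ s, f k).coeff g' = 0 := by
      intro g' hg'
      rw [sum_coeff]
      refine Finset.sum_eq_zero fun k hk => coeff_zero_of_val_lt ?_
      exact lt_of_le_of_lt (hle k hk) (by exact_mod_cast (by linarith : v < -g'))
    have hat : 0 < (∑ k ∈ s, f k).coeff (-v) := by
      rw [sum_coeff]
      refine Finset.sum_pos'
        (fun k hk => coeff_nonneg_of (h k hk) (by rw [neg_neg]; exact hle k hk)) ⟨k0, hk0, ?_⟩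
      obtain ⟨hfk0, ho⟩ := order_of_val (v := v) (by rw [← hk0v, ← hV])
      rw [← ho]
      exact (pos_of_nonneg_ne (h k0 hk0) hfk0).2
    obtain ⟨hp, hv⟩ := pos_of_coeff hbelow hat
    refine ⟨nonneg_of_pos hp, ?_⟩
    rw [hv, neg_neg, hV]

/-- Lemma B: if a sum of terms, each nonnegative or negative, is nonnegative,
and all nonnegative terms have valuation at most `V`, then all terms do. -/
lemma val_le_of_sum_nonneg {ι : Type*} (s : Finset ι) (f : ι → K) (V : WithBot ℝ)
    (hsgn : ∀ k ∈ s, HahnNonneg (f k) ∨ HahnNeg (f k))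
    (hbd : ∀ k ∈ s, HahnNonneg (f k) → hahnVal (f k) ≤ V)
    (hS : HahnNonneg (∑ k ∈ s, f k)) :
    ∀ k ∈ s, hahnVal (f k) ≤ V := by
  by_contra hcon
  push_neg at hcon
  obtain ⟨k1, hk1, hk1v⟩ := hcon
  have hne : s.Nonempty := ⟨k1, hk1⟩
  obtain ⟨kst, hkst, hkstv⟩ := Finset.exists_mem_eq_sup s hne fun k => hahnVal (f k)
  have hWk1 : V < s.sup fun k => hahnVal (f k) :=
    lt_of_lt_of_le hk1v (Finset.le_sup (f := fun k => hahnVal (f k)) hk1)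
  obtain ⟨w, hW⟩ := WithBot.ne_bot_iff_exists.mp (ne_bot_of_gt hWk1)
  rw [← hW] at hWk1
  have hle : ∀ k ∈ s, hahnVal (f k) ≤ ↑w := by
    intro k hk
    have := Finset.le_sup (f := fun k => hahnVal (f k)) hk
    rwa [← hW] at this
  have hbelow : ∀ g' < -w, (∑ k ∈ s, f k).coeff g' = 0 := by
    intro g' hg'
    rw [sum_coeff]
    refine Finset.sum_eq_zero fun k hk => coeff_zero_of_val_lt ?_
    exact lt_of_le_of_lt (hle k hk) (by exact_mod_cast (by linarith : w < -g'))
  have hnegtop : ∀ k ∈ s, hahnVal (f k) = ↑w → (f k).coeff (-w) < 0 := by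
    intro k hk hkw
    have hneg : HahnNeg (f k) := by
      rcases hsgn k hk with hnn | hneg
      · exact absurd hkw (ne_of_lt (lt_of_le_of_lt (hbd k hk hnn) hWk1))
      · exact hneg
    obtain ⟨hfk, ho⟩ := order_of_val hkw
    rw [← ho]
    exact hneg.2
  have hat : (∑ k ∈ s, f k).coeff (-w) < 0 := by
    rw [sum_coeff]
    have h1 : ∀ k ∈ s, (f k).coeff (-w) ≤ (0:ℝ) := by
      intro k hk
      rcases lt_or_eq_of_le (hle k hk) with hlt | heq
      · rw [coeff_zero_of_val_lt (by rwa [neg_neg])]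
      · exact le_of_lt (hnegtop k hk heq)
    have h2 : (f kst).coeff (-w) < 0 := hnegtop kst hkst (by rw [← hkstv, ← hW])
    calc ∑ k ∈ s, (f k).coeff (-w) < ∑ k ∈ s, (0:ℝ) :=
          Finset.sum_lt_sum h1 ⟨kst, hkst, h2⟩
      _ = 0 := by simp
  exact not_nonneg_of_neg (neg_of_coeff hbelow hat).1 hS

/-- Lemma C: comparison of valuations from a nonnegative difference. -/
lemma val_le_of_sub_nonneg {x y : K} (hx : HahnNonneg x) (h : HahnNonneg (y - x)) :
    hahnVal x ≤ hahnVal y := by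
  by_contra hcon
  push_neg at hcon
  by_cases hx0 : x = 0
  · rw [hx0, hahnVal_zero] at hcon; exact absurd hcon (by simp)
  have hxv : hahnVal x = ↑(-x.order) := hahnVal_of_ne hx0
  have hbelow : ∀ g' < x.order, (y - x).coeff g' = 0 := by
    intro g' hg'
    rw [HahnSeries.coeff_sub, coeff_zero_of_val_lt (x := y), coeff_zero_of_val_lt (x := x),
      sub_zero]
    · rw [hahnVal_of_ne hx0]
      exact_mod_cast (by linarith : -x.order < -g')
    · refine lt_of_lt_of_le hcon ?_
      rw [hxv]
      exact_mod_cast (by linarith : -x.order ≤ -g')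
  have hat : (y - x).coeff x.order < 0 := by
    rw [HahnSeries.coeff_sub, coeff_zero_of_val_lt (x := y) (by rwa [← hxv]), zero_sub,
      neg_lt_zero]
    exact (pos_of_nonneg_ne hx hx0).2
  exact not_nonneg_of_neg (neg_of_coeff hbelow hat).1 h

/-- `lift v c` is the monomial `c t^{-v}` for real `v`, and `0` for `v = ⊥`. -/
def lift : WithBot ℝ → ℝ → K
  | ⊥, _ => 0
  | (a : ℝ), c => HahnSeries.single (-a) c

@[simp] lemma lift_bot (c : ℝ) : lift ⊥ c = 0 := rfl
@[simp] lemma lift_coe (a c : ℝ) : lift ↑a c = HahnSeries.single (-a) c := rfl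

lemma lift_mul (v w : WithBot ℝ) (c d : ℝ) : lift v c * lift w d = lift (v + w) (c * d) := by
  induction v with
  | bot => rw [lift_bot, zero_mul, WithBot.bot_add, lift_bot]
  | coe a =>
    induction w with
    | bot => rw [lift_bot, mul_zero, WithBot.add_bot, lift_bot]
    | coe b =>
      rw [lift_coe, lift_coe, HahnSeries.single_mul_single, ← WithBot.coe_add, lift_coe,
        neg_add]

lemma val_lift {c : ℝ} (hc : c ≠ 0) (v : WithBot ℝ) : hahnVal (lift v c) = v := by
  induction v with
  | bot => rw [lift_bot]; exact hahnVal_zero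
  | coe a =>
    rw [lift_coe, hahnVal_of_ne (HahnSeries.single_ne_zero hc),
      HahnSeries.order_single hc, neg_neg]

lemma lift_pos {v : WithBot ℝ} (hv : v ≠ ⊥) {c : ℝ} (hc : 0 < c) : HahnPos (lift v c) := by
  induction v with
  | bot => exact absurd rfl hv
  | coe a =>
    refine ⟨HahnSeries.single_ne_zero hc.ne', ?_⟩
    rw [lift_coe, HahnSeries.order_single hc.ne', HahnSeries.coeff_single_same]
    exact hc

lemma lift_neg' {v : WithBot ℝ} (hv : v ≠ ⊥) {c : ℝ} (hc : c < 0) : HahnNeg (lift v c) := by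
  induction v with
  | bot => exact absurd rfl hv
  | coe a =>
    refine ⟨HahnSeries.single_ne_zero hc.ne, ?_⟩
    rw [lift_coe, HahnSeries.order_single hc.ne, HahnSeries.coeff_single_same]
    exact hc

lemma lift_nonneg (v : WithBot ℝ) {c : ℝ} (hc : 0 < c) : HahnNonneg (lift v c) := by
  induction v with
  | bot => exact Or.inl rfl
  | coe a => exact nonneg_of_pos (lift_pos (WithBot.coe_ne_bot) hc)

lemma lift_coeff_le {v : WithBot ℝ} {c : ℝ} (g : ℝ) :
    (lift v c).coeff g = 0 ∨ (lift v c).coeff g = c := by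
  induction v with
  | bot => left; simp
  | coe a =>
    rw [lift_coe, HahnSeries.coeff_single]
    split <;> simp

lemma val_mul (x y : K) : hahnVal (x * y) = hahnVal x + hahnVal y := by
  by_cases hx : x = 0
  · rw [hx, zero_mul, hahnVal_zero, WithBot.bot_add]
  by_cases hy : y = 0
  · rw [hy, mul_zero, hahnVal_zero, WithBot.add_bot]
  have hxy : x * y ≠ 0 := mul_ne_zero hx hy
  rw [hahnVal_of_ne hxy, hahnVal_of_ne hx, hahnVal_of_ne hy, HahnSeries.order_mul hx hy,
    ← WithBot.coe_add, neg_add]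

lemma lead_mul {x y : K} (hx : x ≠ 0) (hy : y ≠ 0) :
    (x * y).coeff (x * y).order = x.coeff x.order * y.coeff y.order := by
  rw [HahnSeries.order_mul hx hy]
  have := HahnSeries.coeff_mul_order_add_order x y
  rwa [HahnSeries.leadingCoeff_eq, HahnSeries.leadingCoeff_eq] at this

lemma mul_nonneg' {x y : K} (hx : HahnNonneg x) (hy : HahnNonneg y) : HahnNonneg (x * y) := by
  by_cases hx0 : x = 0
  · rw [hx0, zero_mul]; exact Or.inl rfl
  by_cases hy0 : y = 0
  · rw [hy0, mul_zero]; exact Or.inl rfl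
  right
  rw [lead_mul hx0 hy0]
  exact mul_pos (pos_of_nonneg_ne hx hx0).2 (pos_of_nonneg_ne hy hy0).2

lemma mul_neg' {x y : K} (hx : HahnNeg x) (hy : HahnPos y) : HahnNeg (x * y) := by
  refine ⟨mul_ne_zero hx.1 hy.1, ?_⟩
  rw [lead_mul hx.1 hy.1]
  exact mul_neg_of_neg_of_pos hx.2 hy.2

lemma lift_coeff_zero {v : WithBot ℝ} {c : ℝ} {g : ℝ} (h : v < ↑(-g)) :
    (lift v c).coeff g = 0 := by
  induction v with
  | bot => rw [lift_bot]; simp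
  | coe a =>
    rw [lift_coe, HahnSeries.coeff_single]
    rw [WithBot.coe_lt_coe] at h
    rw [if_neg (by intro hg; rw [hg] at h; linarith)]

lemma one_eq_lift : (1 : K) = lift ((0:ℝ) : WithBot ℝ) 1 := by
  rw [lift_coe, neg_zero, HahnSeries.single_zero_one]

/-- Facts about a term `(if vp = ⊥ then lift vn (-1) else lift vp C) * y`. -/
lemma termFacts {C : ℝ} (hC : 0 < C) (vp vn : WithBot ℝ) {y : K} (hy : HahnNonneg y) :
    (HahnNonneg ((if vp = ⊥ then lift vn (-1) else lift vp C) * y) ∨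
     HahnNeg ((if vp = ⊥ then lift vn (-1) else lift vp C) * y)) ∧
    (HahnNonneg ((if vp = ⊥ then lift vn (-1) else lift vp C) * y) →
      hahnVal ((if vp = ⊥ then lift vn (-1) else lift vp C) * y) ≤ vp + hahnVal y) ∧
    (vp = ⊥ →
      hahnVal ((if vp = ⊥ then lift vn (-1) else lift vp C) * y) = vn + hahnVal y) := by
  by_cases hvp : vp = ⊥
  · simp only [if_pos hvp]
    have hval : hahnVal (lift vn (-1) * y) = vn + hahnVal y := by
      rw [val_mul, val_lift (by norm_num)]
    refine ⟨?_, ?_, fun _ => hval⟩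
    · by_cases hy0 : y = 0
      · left; rw [hy0, mul_zero]; exact Or.inl rfl
      by_cases hvn : vn = ⊥
      · left; rw [hvn, lift_bot, zero_mul]; exact Or.inl rfl
      · right; exact mul_neg' (lift_neg' hvn (by norm_num)) (pos_of_nonneg_ne hy hy0)
    · intro hnn
      by_cases hy0 : y = 0
      · rw [hy0, mul_zero, hahnVal_zero]; exact bot_le
      by_cases hvn : vn = ⊥
      · rw [hvn, lift_bot, zero_mul, hahnVal_zero]; exact bot_le
      · exact absurd hnn (not_nonneg_of_neg
          (mul_neg' (lift_neg' hvn (by norm_num)) (pos_of_nonneg_ne hy hy0)))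
  · simp only [if_neg hvp]
    have hval : hahnVal (lift vp C * y) = vp + hahnVal y := by
      rw [val_mul, val_lift (ne_of_gt hC)]
    exact ⟨Or.inl (mul_nonneg' (nonneg_of_pos (lift_pos hvp hC)) hy),
      fun _ => le_of_eq hval, fun hvp' => absurd hvp' hvp⟩

lemma sup_option {ι : Type*} [Fintype ι] (v : Option ι → WithBot ℝ) :
    (univ : Finset (Option ι)).sup v = (univ.sup fun j => v (some j)) ⊔ v none := by
  apply le_antisymm
  · refine Finset.sup_le fun o _ => ?_
    cases o with
    | none => exact le_sup_right
    | some j =>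
        exact le_trans (Finset.le_sup (f := fun j => v (some j)) (mem_univ j)) le_sup_left
  · exact sup_le (Finset.sup_le fun j _ => Finset.le_sup (mem_univ _))
      (Finset.le_sup (mem_univ none))

/-- Lemma D: sufficient criterion for a sum of monomial lifts to be nonnegative. -/
lemma sum_lift_nonneg {ι : Type*} [Fintype ι] (f : ι → K) (vP vN : ι → WithBot ℝ) (C : ℝ)
    (hC : 0 < C) (hCn : (Fintype.card ι : ℝ) ≤ C)
    (hf : ∀ k, (f k = lift (vN k) (-1) ∧ vP k = ⊥) ∨ f k = lift (vP k) C)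
    (hc : ∀ k, vN k ≤ univ.sup vP) :
    HahnNonneg (∑ k, f k) := by
  by_cases hRb : univ.sup vP = ⊥
  · have hz : ∀ k ∈ (univ : Finset ι), f k = 0 := by
      intro k _
      have hvP : vP k = ⊥ := le_bot_iff.mp (hRb ▸ Finset.le_sup (mem_univ k))
      have hvN : vN k = ⊥ := le_bot_iff.mp (hRb ▸ hc k)
      rcases hf k with ⟨hfk, _⟩ | hfk
      · rw [hfk, hvN, lift_bot]
      · rw [hfk, hvP, lift_bot]
    rw [Finset.sum_eq_zero hz]
    exact Or.inl rfl
  · obtain ⟨r, hR⟩ := WithBot.ne_bot_iff_exists.mp hRb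
    have hne : (univ : Finset ι).Nonempty := by
      rcases Finset.eq_empty_or_nonempty (univ : Finset ι) with h | h
      · rw [h] at hRb; simp at hRb
      · exact h
    obtain ⟨k0, hk0, hk0v⟩ := Finset.exists_mem_eq_sup univ hne vP
    have hfk0 : f k0 = lift (↑r) C := by
      rcases hf k0 with ⟨_, hbot⟩ | hfk
      · rw [hbot] at hk0v; rw [← hR] at hk0v; exact absurd hk0v.symm (by simp)
      · rw [hfk, ← hk0v, ← hR]
    have hvle : ∀ k, vP k ≤ ↑r ∧ vN k ≤ ↑r := fun k =>
      ⟨hR ▸ Finset.le_sup (mem_univ k), hR ▸ hc k⟩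
    have hbelow : ∀ g' < -r, (∑ k, f k).coeff g' = 0 := by
      intro g' hg'
      rw [sum_coeff]
      refine Finset.sum_eq_zero fun k _ => ?_
      rcases hf k with ⟨hfk, _⟩ | hfk
      · rw [hfk]
        exact lift_coeff_zero
          (lt_of_le_of_lt (hvle k).2 (by exact_mod_cast (by linarith : r < -g')))
      · rw [hfk]
        exact lift_coeff_zero
          (lt_of_le_of_lt (hvle k).1 (by exact_mod_cast (by linarith : r < -g')))
    have hat : 0 < (∑ k, f k).coeff (-r) := by
      rw [sum_coeff]
      rw [← Finset.add_sum_erase _ _ (mem_univ k0)]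
      have hk0c : (f k0).coeff (-r) = C := by
        rw [hfk0, lift_coe, HahnSeries.coeff_single_same]
      have hrest : ∀ k ∈ univ.erase k0, (-1:ℝ) ≤ (f k).coeff (-r) := by
        intro k _
        rcases hf k with ⟨hfk, _⟩ | hfk <;> rw [hfk] <;>
          rcases lift_coeff_le (-r) with h | h <;> rw [h] <;> linarith
      have hsum := Finset.card_nsmul_le_sum (univ.erase k0) (fun x => (f x).coeff (-r)) (-1)
        hrest
      rw [Finset.card_erase_of_mem (mem_univ k0), Finset.card_univ] at hsum
      have h1 : 1 ≤ Fintype.card ι := Fintype.card_pos_iff.mpr ⟨k0⟩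
      have hsum' : -((Fintype.card ι : ℝ) - 1) ≤ ∑ k ∈ univ.erase k0, (f k).coeff (-r) := by
        calc -((Fintype.card ι : ℝ) - 1) = ((Fintype.card ι - 1 : ℕ) : ℝ) * (-1) := by
              push_cast [h1]; ring
          _ ≤ _ := by simpa [nsmul_eq_mul] using hsum
      rw [hk0c]
      linarith
    exact nonneg_of_pos (pos_of_coeff hbelow hat).1

/-- Forward direction: valuations of points of `𝓟` lie in the tropical polyhedron. -/
lemma forward {m n : ℕ} (Ap An : Matrix (Fin m) (Fin n) (WithBot ℝ))
    (bp bn : Fin m → WithBot ℝ)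
    (hA : ∀ i j, Ap i j = ⊥ ∨ An i j = ⊥) (hb : ∀ i, bp i = ⊥ ∨ bn i = ⊥)
    {C : ℝ} (hC : 0 < C) (xK : Fin n → K) (hxnn : ∀ j, HahnNonneg (xK j))
    (hxcon : ∀ i, HahnNonneg ((∑ j, (if Ap i j = ⊥ then lift (An i j) (-1)
        else lift (Ap i j) C) * xK j) +
      (if bp i = ⊥ then lift (bn i) (-1) else lift (bp i) C))) :
    (fun j => hahnVal (xK j)) ∈ tropPolyhedron Ap An bp bn := by
  intro i
  have h1nn : HahnNonneg (1 : K) := by rw [one_eq_lift]; exact lift_nonneg _ one_pos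
  have hval1 : hahnVal (1 : K) = ((0:ℝ) : WithBot ℝ) := by
    rw [one_eq_lift]; exact val_lift one_ne_zero _
  have hmain := val_le_of_sum_nonneg (univ : Finset (Option (Fin n)))
      (fun o => Option.elim o
        ((if bp i = ⊥ then lift (bn i) (-1) else lift (bp i) C) * 1)
        (fun j => (if Ap i j = ⊥ then lift (An i j) (-1) else lift (Ap i j) C) * xK j))
      ((univ.sup fun j => Ap i j + hahnVal (xK j)) ⊔ bp i) ?_ ?_ ?_
  · refine sup_le (Finset.sup_le fun j _ => ?_) ?_
    · by_cases hAn : An i j = ⊥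
      · rw [hAn, WithBot.bot_add]; exact bot_le
      · have hAp : Ap i j = ⊥ := (hA i j).resolve_right hAn
        have h3 := (termFacts hC (Ap i j) (An i j) (hxnn j)).2.2 hAp
        calc An i j + hahnVal (xK j)
            = hahnVal ((if Ap i j = ⊥ then lift (An i j) (-1) else lift (Ap i j) C) * xK j) :=
              h3.symm
          _ ≤ _ := hmain (some j) (mem_univ _)
    · by_cases hbn : bn i = ⊥
      · rw [hbn]; exact bot_le
      · have hbp : bp i = ⊥ := (hb i).resolve_right hbn
        have h3 := (termFacts hC (bp i) (bn i) h1nn).2.2 hbp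
        calc bn i = bn i + hahnVal (1 : K) := by rw [hval1, WithBot.coe_zero, add_zero]
          _ = hahnVal ((if bp i = ⊥ then lift (bn i) (-1) else lift (bp i) C) * 1) := h3.symm
          _ ≤ _ := hmain none (mem_univ _)
  · intro o _
    cases o with
    | none => exact (termFacts hC (bp i) (bn i) h1nn).1
    | some j => exact (termFacts hC (Ap i j) (An i j) (hxnn j)).1
  · intro o _ hnn
    cases o with
    | none =>
      refine le_trans ((termFacts hC (bp i) (bn i) h1nn).2.1 hnn) ?_
      rw [hval1, WithBot.coe_zero, add_zero]
      exact le_sup_right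
    | some j =>
      refine le_trans ((termFacts hC (Ap i j) (An i j) (hxnn j)).2.1 hnn) ?_
      exact le_trans
        (Finset.le_sup (f := fun j => Ap i j + hahnVal (xK j)) (mem_univ j)) le_sup_left
  · have heq : (∑ o : Option (Fin n), Option.elim o
        ((if bp i = ⊥ then lift (bn i) (-1) else lift (bp i) C) * 1)
        (fun j => (if Ap i j = ⊥ then lift (An i j) (-1) else lift (Ap i j) C) * xK j))
        = (∑ j, (if Ap i j = ⊥ then lift (An i j) (-1) else lift (Ap i j) C) * xK j) +
          (if bp i = ⊥ then lift (bn i) (-1) else lift (bp i) C) := by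
      rw [Fintype.sum_option]
      simp only [Option.elim]
      rw [mul_one, add_comm]
    rw [heq]
    exact hxcon i

/-- Backward direction: the canonical lift of a tropical point satisfies the constraints. -/
lemma backward {m n : ℕ} (Ap An : Matrix (Fin m) (Fin n) (WithBot ℝ))
    (bp bn : Fin m → WithBot ℝ)
    {C : ℝ} (hC : 0 < C) (hCn : (n : ℝ) + 1 ≤ C)
    (x : Fin n → WithBot ℝ) (hx : x ∈ tropPolyhedron Ap An bp bn) (i : Fin m) :
    HahnNonneg ((∑ j, (if Ap i j = ⊥ then lift (An i j) (-1) else lift (Ap i j) C) *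
        lift (x j) 1) +
      (if bp i = ⊥ then lift (bn i) (-1) else lift (bp i) C)) := by
  have hterm : ∀ j, (if Ap i j = ⊥ then lift (An i j) (-1) else lift (Ap i j) C) *
      lift (x j) 1 =
      if Ap i j = ⊥ then lift (An i j + x j) (-1) else lift (Ap i j + x j) C := by
    intro j
    by_cases h : Ap i j = ⊥ <;> simp only [if_pos, if_neg, h, ite_true, ite_false] <;>
      rw [lift_mul] <;> norm_num
  have hsupP : univ.sup (fun o => Option.elim o (bp i) (fun j => Ap i j + x j)) =
      (univ.sup fun j => Ap i j + x j) ⊔ bp i := by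
    rw [sup_option]; rfl
  have htrop := hx i
  have hD := sum_lift_nonneg
      (fun o => Option.elim o
        (if bp i = ⊥ then lift (bn i) (-1) else lift (bp i) C)
        (fun j => (if Ap i j = ⊥ then lift (An i j) (-1) else lift (Ap i j) C) * lift (x j) 1))
      (fun o => Option.elim o (bp i) (fun j => Ap i j + x j))
      (fun o => Option.elim o (bn i) (fun j => An i j + x j)) C hC ?_ ?_ ?_
  · have heq : (∑ o : Option (Fin n), Option.elim o
        (if bp i = ⊥ then lift (bn i) (-1) else lift (bp i) C)
        (fun j => (if Ap i j = ⊥ then lift (An i j) (-1) else lift (Ap i j) C) * lift (x j) 1))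
        = (∑ j, (if Ap i j = ⊥ then lift (An i j) (-1) else lift (Ap i j) C) * lift (x j) 1) +
          (if bp i = ⊥ then lift (bn i) (-1) else lift (bp i) C) := by
      rw [Fintype.sum_option]
      simp only [Option.elim]
      rw [add_comm]
    rw [heq] at hD
    exact hD
  · rw [Fintype.card_option, Fintype.card_fin]
    push_cast
    linarith
  · intro k
    cases k with
    | none =>
      by_cases h : bp i = ⊥
      · left
        exact ⟨by simp only [Option.elim]; rw [if_pos h], h⟩
      · right
        simp only [Option.elim]
        rw [if_neg h]
    | some j =>
      by_cases h : Ap i j = ⊥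
      · left
        refine ⟨?_, ?_⟩
        · simp only [Option.elim]
          rw [hterm j, if_pos h]
        · simp only [Option.elim]
          rw [h, WithBot.bot_add]
      · right
        simp only [Option.elim]
        rw [hterm j, if_neg h]
  · intro k
    cases k with
    | none =>
      show bn i ≤ univ.sup fun o => Option.elim o (bp i) fun j => Ap i j + x j
      rw [hsupP]
      exact le_trans le_sup_right htrop
    | some j =>
      show An i j + x j ≤ univ.sup fun o => Option.elim o (bp i) fun j => Ap i j + x j
      rw [hsupP]
      exact le_trans
        (le_trans (Finset.le_sup (f := fun j => An i j + x j) (mem_univ j)) le_sup_left) htrop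

end TropLift

open TropLift

/-- Any tropical linear program admits a lift over the field of Hahn series:
there are matrices `𝐀, 𝐛, 𝐜` with the prescribed signed valuations such that the polyhedron
`𝓟 = {𝐱 ≥ 0 | 𝐀 𝐱 + 𝐛 ≥ 0}` maps onto `P(A, b)` under the valuation, and optimal solutions
of the lifted linear program give optimal solutions of the tropical one. -/
theorem tropical_lp_lift_exists (m n : ℕ)
    (Ap An : Matrix (Fin m) (Fin n) (WithBot ℝ)) (bp bn : Fin m → WithBot ℝ)
    (c : Fin n → WithBot ℝ)
    (hA : ∀ i j, Ap i j = ⊥ ∨ An i j = ⊥) (hb : ∀ i, bp i = ⊥ ∨ bn i = ⊥) :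
    ∃ (AK : Matrix (Fin m) (Fin n) (HahnSeries ℝ ℝ)) (bK : Fin m → HahnSeries ℝ ℝ)
      (cK : Fin n → HahnSeries ℝ ℝ),
      (∀ i j,
        (Ap i j ≠ ⊥ → HahnPos (AK i j) ∧ hahnVal (AK i j) = Ap i j) ∧
        (An i j ≠ ⊥ → HahnNeg (AK i j) ∧ hahnVal (AK i j) = An i j) ∧
        (Ap i j = ⊥ ∧ An i j = ⊥ → AK i j = 0)) ∧
      (∀ i,
        (bp i ≠ ⊥ → HahnPos (bK i) ∧ hahnVal (bK i) = bp i) ∧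
        (bn i ≠ ⊥ → HahnNeg (bK i) ∧ hahnVal (bK i) = bn i) ∧
        (bp i = ⊥ ∧ bn i = ⊥ → bK i = 0)) ∧
      (∀ j, HahnNonneg (cK j) ∧ hahnVal (cK j) = c j) ∧
      (∀ P : Set (Fin n → HahnSeries ℝ ℝ),
        P = {xK | (∀ j, HahnNonneg (xK j)) ∧ ∀ i, HahnNonneg (∑ j, AK i j * xK j + bK i)} →
        ({y | ∃ xK ∈ P, (fun j => hahnVal (xK j)) = y} = tropPolyhedron Ap An bp bn ∧
        ∀ xs ∈ P,
          (∀ yK ∈ P, HahnGe (∑ j, cK j * yK j) (∑ j, cK j * xs j)) →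
          ∀ x ∈ tropPolyhedron Ap An bp bn,
            (univ.sup fun j => c j + hahnVal (xs j)) ≤ univ.sup fun j => c j + x j)) := by
  have hC : (0:ℝ) < (n : ℝ) + 2 := by positivity
  have hCn : (n : ℝ) + 1 ≤ (n : ℝ) + 2 := by linarith
  refine ⟨fun i j => if Ap i j = ⊥ then lift (An i j) (-1) else lift (Ap i j) ((n:ℝ)+2),
    fun i => if bp i = ⊥ then lift (bn i) (-1) else lift (bp i) ((n:ℝ)+2),
    fun j => lift (c j) 1, ?_, ?_, ?_, ?_⟩
  · intro i j
    refine ⟨fun h => ?_, fun h => ?_, fun h => ?_⟩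
    · simp only [if_neg h]
      exact ⟨lift_pos h hC, val_lift (ne_of_gt hC) _⟩
    · have hAp : Ap i j = ⊥ := (hA i j).resolve_right h
      simp only [if_pos hAp]
      exact ⟨lift_neg' h (by norm_num), val_lift (by norm_num) _⟩
    · simp only [if_pos h.1, h.2, lift_bot]
  · intro i
    refine ⟨fun h => ?_, fun h => ?_, fun h => ?_⟩
    · simp only [if_neg h]
      exact ⟨lift_pos h hC, val_lift (ne_of_gt hC) _⟩
    · have hbp : bp i = ⊥ := (hb i).resolve_right h
      simp only [if_pos hbp]
      exact ⟨lift_neg' h (by norm_num), val_lift (by norm_num) _⟩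
    · simp only [if_pos h.1, h.2, lift_bot]
  · intro j
    exact ⟨lift_nonneg _ one_pos, val_lift one_ne_zero _⟩
  · intro P hP
    subst hP
    constructor
    · apply Set.ext
      intro y
      constructor
      · rintro ⟨xK, ⟨hxnn, hxcon⟩, rfl⟩
        exact forward Ap An bp bn hA hb hC xK hxnn hxcon
      · intro hy
        refine ⟨fun j => lift (y j) 1, ⟨fun j => lift_nonneg _ one_pos, fun i => ?_⟩,
          funext fun j => val_lift one_ne_zero _⟩
        exact backward Ap An bp bn hC hCn y hy i
    · rintro xs ⟨hxsnn, hxscon⟩ hopt x hx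
      have hyP : (fun j => lift (x j) 1) ∈
          {xK : Fin n → K | (∀ j, HahnNonneg (xK j)) ∧
            ∀ i, HahnNonneg (∑ j, (if Ap i j = ⊥ then lift (An i j) (-1)
              else lift (Ap i j) ((n:ℝ)+2)) * xK j +
              (if bp i = ⊥ then lift (bn i) (-1) else lift (bp i) ((n:ℝ)+2)))} :=
        ⟨fun j => lift_nonneg _ one_pos, fun i => backward Ap An bp bn hC hCn x hx i⟩
      have hge := hopt _ hyP
      have hxsterm : ∀ j ∈ (univ : Finset (Fin n)), HahnNonneg (lift (c j) 1 * xs j) :=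
        fun j _ => mul_nonneg' (lift_nonneg _ one_pos) (hxsnn j)
      have hyterm : ∀ j ∈ (univ : Finset (Fin n)), HahnNonneg (lift (c j) 1 * lift (x j) 1) :=
        fun j _ => mul_nonneg' (lift_nonneg _ one_pos) (lift_nonneg _ one_pos)
      have hxs_sum := sum_nonneg_val univ (fun j => lift (c j) 1 * xs j) hxsterm
      have hy_sum := sum_nonneg_val univ (fun j => lift (c j) 1 * lift (x j) 1) hyterm
      have hle : hahnVal (∑ j, lift (c j) 1 * xs j) ≤
          hahnVal (∑ j, lift (c j) 1 * lift (x j) 1) :=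
        val_le_of_sub_nonneg hxs_sum.1 hge
      calc (univ.sup fun j => c j + hahnVal (xs j))
          = univ.sup fun j => hahnVal (lift (c j) 1 * xs j) := by
            refine Finset.sup_congr rfl fun j _ => ?_
            rw [val_mul, val_lift one_ne_zero]
        _ = hahnVal (∑ j, lift (c j) 1 * xs j) := hxs_sum.2.symm
        _ ≤ hahnVal (∑ j, lift (c j) 1 * lift (x j) 1) := hle
        _ = univ.sup fun j => hahnVal (lift (c j) 1 * lift (x j) 1) := hy_sum.2
        _ = univ.sup fun j => c j + x j := by
            refine Finset.sup_congr rfl fun j _ => ?_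
            rw [val_mul, val_lift one_ne_zero, val_lift one_ne_zero]

end
end

section
/- Let M : Fin p → Fin q → WithBot G and s : Fin p → Fin q → ℤ with s i j ∈ {1, −1} for all i, j. Define M̃ : Fin p → Fin q → WithBot (G ×ₗ H) by M̃ i j := ⊥ if M i j = ⊥, and M̃ i j := (M i j, (s i j * ((i : ℕ) + 1)) • δ j) otherwise, where δ j : Fin q → ℝ is the j-th standard basis vector. Then M̃ is tropically generic: for every k and all injective maps r : Fin k → Fin p, c : Fin k → Fin q, the submatrix (i, j) ↦ M̃ (r i) (c j) is either tropically nonsingular or has tropical permanent ⊥. -/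
noncomputable section

/-- The group `H := Lex (Fin q → ℝ)`: `ℝ^q` with componentwise addition and the
lexicographic order. -/
noncomputable instance lexPiLinearOrderedAddCommGroup (q : ℕ) :
    IsOrderedCancelAddMonoid (Lex (Fin q → ℝ)) :=
  inferInstance

variable {G : Type*} [AddCommGroup G] [LinearOrder G] [IsOrderedAddMonoid G]

/-- Tropical permanent of a square matrix over the max-plus semiring `WithBot G'`:
`tper M = ⊔_σ Σ_i M i (σ i)`, sums taken in `WithBot G'` (`⊥` is absorbing for `+`). -/
def tper {G' : Type*} [AddCommGroup G'] [LinearOrder G'] [IsOrderedAddMonoid G'] {k : ℕ}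
    (M : Matrix (Fin k) (Fin k) (WithBot G')) : WithBot G' :=
  Finset.univ.sup (fun σ : Equiv.Perm (Fin k) => ∑ i, M i (σ i))

/-- A square matrix over `WithBot G'` is tropically nonsingular if its tropical permanent is
not `⊥` and exactly one permutation attains the maximum. -/
def TropNonsingular {G' : Type*} [AddCommGroup G'] [LinearOrder G'] [IsOrderedAddMonoid G'] {k : ℕ}
    (M : Matrix (Fin k) (Fin k) (WithBot G')) : Prop :=
  tper M ≠ ⊥ ∧ ∃! σ : Equiv.Perm (Fin k), ∑ i, M i (σ i) = tper M

/-- A (rectangular) matrix over `WithBot G'` is tropically generic if each of its square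
submatrices is tropically nonsingular or has tropical permanent `⊥`. -/
def TropGeneric {G' : Type*} [AddCommGroup G'] [LinearOrder G'] [IsOrderedAddMonoid G'] {p q : ℕ}
    (N : Fin p → Fin q → WithBot G') : Prop :=
  ∀ (k : ℕ) (r : Fin k → Fin p) (c : Fin k → Fin q),
    Function.Injective r → Function.Injective c →
      TropNonsingular (Matrix.of fun i j => N (r i) (c j)) ∨
        tper (Matrix.of fun i j => N (r i) (c j)) = ⊥

/-- `toLex` as an additive equivalence. -/
def lexAddEquiv (α : Type*) [AddCommMonoid α] : α ≃+ Lex α :=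
  { toLex with map_add' := fun _ _ => rfl }

/-- Perturbing the non-`⊥` entries of any matrix `M` over `WithBot G` by
the lexicographically infinitesimal vectors `(s i j * (i + 1)) • δ j` (with `s i j = ±1`)
produces a tropically generic matrix over `WithBot (G ×ₗ Lex (Fin q → ℝ))`. -/
theorem perturbed_matrix_tropically_generic (p q : ℕ)
    (M : Fin p → Fin q → WithBot G) (s : Fin p → Fin q → ℤ)
    (hs : ∀ i j, s i j = 1 ∨ s i j = -1) :
    TropGeneric (fun (i : Fin p) (j : Fin q) =>
      WithBot.map
        (fun g => toLex
          (g, (s i j * (((i : ℕ) : ℤ) + 1)) • toLex (Pi.single j (1 : ℝ) : Fin q → ℝ)))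
        (M i j)) := by
  intro k r c hr hc
  -- the sign-weight integer attached to entry (i, j) of the submatrix
  set t : Fin k → Fin k → ℤ := fun i j => s (r i) (c j) * (((r i : ℕ) : ℤ) + 1) with ht
  set w : Fin k → Fin k → Lex (Fin q → ℝ) := fun i j => t i j • toLex (Pi.single (c j) (1 : ℝ) : Fin q → ℝ)
    with hw
  set N : Matrix (Fin k) (Fin k) (WithBot (G ×ₗ (Lex (Fin q → ℝ)))) :=
    Matrix.of fun i j => WithBot.map (fun g => toLex (g, w i j)) (M (r i) (c j)) with hN
  by_cases hbot : tper N = ⊥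
  · exact Or.inr hbot
  left
  refine ⟨hbot, ?_⟩
  -- existence of a maximizing permutation
  have hsup := Finset.exists_mem_eq_sup (Finset.univ : Finset (Equiv.Perm (Fin k)))
    Finset.univ_nonempty
    (fun σ : Equiv.Perm (Fin k) => (∑ i, N i (σ i) : WithBot (Lex (G × Lex (Fin q → ℝ)))))
  obtain ⟨σ0, -, hσ0⟩ := hsup
  have hσ0 : tper N = ∑ i, N i (σ0 i) := hσ0
  -- decomposition of the sum for a permutation with non-⊥ sum
  have key : ∀ ρ : Equiv.Perm (Fin k), (∑ i, N i (ρ i)) ≠ ⊥ →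
      ∃ g : Fin k → G, (∑ i, N i (ρ i)) = ↑(toLex (∑ i, g i, ∑ i, w i (ρ i))) := by
    intro ρ hρ
    have hne : ∀ i : Fin k, M (r i) (c (ρ i)) ≠ ⊥ := by
      intro i hi
      apply hρ
      rw [WithBot.sum_eq_bot_iff]
      exact ⟨i, Finset.mem_univ i, by simp [hN, hi]⟩
    choose g hg using fun i => WithBot.ne_bot_iff_exists.mp (hne i)
    refine ⟨g, ?_⟩
    have hentry : ∀ i : Fin k, N i (ρ i) = ↑(toLex (g i, w i (ρ i))) := by
      intro i
      show WithBot.map (fun x => toLex (x, w i (ρ i))) (M (r i) (c (ρ i))) = _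
      rw [← hg i]
      rfl
    have hprod : (∑ i, (g i, w i (ρ i))) = (∑ i, g i, ∑ i, w i (ρ i)) :=
      Prod.ext Prod.fst_sum Prod.snd_sum
    calc (∑ i, N i (ρ i))
        = ∑ i, (↑(toLex (g i, w i (ρ i))) : WithBot (G ×ₗ (Lex (Fin q → ℝ)))) :=
          Finset.sum_congr rfl fun i _ => hentry i
      _ = ↑(∑ i, toLex (g i, w i (ρ i))) := (WithBot.coe_sum _ _).symm
      _ = ↑(toLex (∑ i, (g i, w i (ρ i)))) := by
          rw [show (∑ i, toLex (g i, w i (ρ i)))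
              = (lexAddEquiv (G × Lex (Fin q → ℝ))) (∑ i, (g i, w i (ρ i)))
            from (map_sum (lexAddEquiv (G × Lex (Fin q → ℝ))) _ _).symm]
          rfl
      _ = ↑(toLex (∑ i, g i, ∑ i, w i (ρ i))) := by rw [hprod]
  -- evaluate the second (lex-infinitesimal) component at column c i0
  have eval : ∀ (ρ : Equiv.Perm (Fin k)) (i0 : Fin k),
      ofLex (∑ i, w i (ρ i)) (c i0) = (t (ρ.symm i0) i0 : ℝ) := by
    intro ρ i0
    have : ofLex (∑ i, w i (ρ i)) = ∑ i, ofLex (w i (ρ i)) :=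
      map_sum (lexAddEquiv (Fin q → ℝ)).symm _ _
    rw [this]
    rw [Finset.sum_apply]
    have hterm : ∀ i : Fin k,
        ofLex (w i (ρ i)) (c i0) = if i = ρ.symm i0 then (t (ρ.symm i0) i0 : ℝ) else 0 := by
      intro i
      have h1 : ofLex (w i (ρ i)) (c i0)
          = (t i (ρ i) : ℝ) * (Pi.single (c (ρ i)) (1 : ℝ) : Fin q → ℝ) (c i0) := by
        show (t i (ρ i)) • ((Pi.single (c (ρ i)) (1 : ℝ) : Fin q → ℝ) (c i0))
          = (t i (ρ i) : ℝ) * _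
        rw [zsmul_eq_mul]
      rw [h1, Pi.single_apply]
      by_cases hcase : i = ρ.symm i0
      · subst hcase
        simp [Equiv.apply_symm_apply]
      · have : ¬ (c i0 = c (ρ i)) := by
          intro hcc
          exact hcase (by
            have := hc hcc
            rw [this, Equiv.symm_apply_apply])
        simp [this, hcase]
    rw [Finset.sum_congr rfl (fun i _ => hterm i), Finset.sum_ite_eq' Finset.univ (ρ.symm i0)]
    simp
  -- core uniqueness
  have uniq : ∀ σ τ : Equiv.Perm (Fin k),
      (∑ i, N i (σ i)) = tper N → (∑ i, N i (τ i)) = tper N → σ = τ := by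
    intro σ τ hσ hτ
    obtain ⟨g1, hg1⟩ := key σ (hσ ▸ hbot)
    obtain ⟨g2, hg2⟩ := key τ (hτ ▸ hbot)
    have hsum : (↑(toLex (∑ i, g1 i, ∑ i, w i (σ i))) : WithBot (G ×ₗ (Lex (Fin q → ℝ))))
        = ↑(toLex (∑ i, g2 i, ∑ i, w i (τ i))) := by
      rw [← hg1, ← hg2, hσ, hτ]
    have hpair := toLex.injective (WithBot.coe_injective hsum)
    have hsnd : (∑ i, w i (σ i)) = ∑ i, w i (τ i) := congrArg Prod.snd hpair
    have hptwise : ∀ i0 : Fin k, σ.symm i0 = τ.symm i0 := by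
      intro i0
      have he : (t (σ.symm i0) i0 : ℝ) = (t (τ.symm i0) i0 : ℝ) := by
        rw [← eval σ i0, ← eval τ i0, hsnd]
      set a := σ.symm i0
      set b := τ.symm i0
      have ha : (0:ℝ) ≤ ((r a : ℕ) : ℝ) := Nat.cast_nonneg _
      have hb : (0:ℝ) ≤ ((r b : ℕ) : ℝ) := Nat.cast_nonneg _
      have he' : (s (r a) (c i0) : ℝ) * (((r a : ℕ) : ℝ) + 1)
          = (s (r b) (c i0) : ℝ) * (((r b : ℕ) : ℝ) + 1) := by
        have := he
        push_cast [ht] at this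
        convert this using 2
      have hreq : ((r a : ℕ) : ℝ) = ((r b : ℕ) : ℝ) := by
        rcases hs (r a) (c i0) with h1 | h1 <;> rcases hs (r b) (c i0) with h2 | h2 <;>
          rw [h1, h2] at he' <;> push_cast at he' <;> linarith
      have : r a = r b := Fin.ext (Nat.cast_injective hreq)
      exact hr this
    have hsymm : σ.symm = τ.symm := Equiv.ext hptwise
    calc σ = σ.symm.symm := (Equiv.symm_symm σ).symm
      _ = τ.symm.symm := by rw [hsymm]
      _ = τ := Equiv.symm_symm τ
  refine ⟨σ0, hσ0.symm, fun τ hτ => uniq τ σ0 hτ hσ0.symm⟩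

end
end

section
/- Let W : Matrix (Fin (k+1)) (Fin k) (WithBot G') be a matrix all of whose non-⊥ entries have layer 0, and let f : Fin (k+1) → WithBot G' be such that the layers of the non-⊥ values f i are pairwise distinct. Let M be the (k+1)×(k+1) matrix whose first k columns are those of W and whose last column is f, and for i : Fin (k+1) let W_î be W with row i deleted (rows reindexed via Fin.succAbove i). If for every i the matrix W_î is either tropically nonsingular or has tropical permanent ⊥, then M is either tropically nonsingular or has tropical permanent ⊥. -/
noncomputable section

variable {K₀ : Type*} [AddCommGroup K₀] [LinearOrder K₀] [IsOrderedAddMonoid K₀]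

/-- Sums of layer-zero entries are `⊥` or layer-zero. -/
lemma layer_sum {ι : Type*} (s : Finset ι) (g : ι → WithBot (ℝ ×ₗ K₀)) :
    (∀ i ∈ s, ∀ w : ℝ ×ₗ K₀, g i = ↑w → (ofLex w).1 = 0) →
    (∑ i ∈ s, g i) = ⊥ ∨ ∃ z : ℝ ×ₗ K₀, (∑ i ∈ s, g i) = ↑z ∧ (ofLex z).1 = 0 := by
  classical
  induction s using Finset.induction_on with
  | empty => exact fun _ => Or.inr ⟨0, by simp, rfl⟩
  | @insert a s ha ih =>
    intro h
    rw [Finset.sum_insert ha]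
    rcases ih (fun i hi => h i (Finset.mem_insert_of_mem hi)) with hb | ⟨z, hz, hz0⟩
    · rw [hb]; exact Or.inl (WithBot.add_bot _)
    · cases hga : g a with
      | bot => exact Or.inl (WithBot.bot_add _)
      | coe w =>
        refine Or.inr ⟨w + z, by rw [hz, ← WithBot.coe_add], ?_⟩
        have hw0 : (ofLex w).1 = 0 := h a (Finset.mem_insert_self a s) w hga
        have : (ofLex (w + z)).1 = (ofLex w).1 + (ofLex z).1 := rfl
        rw [this, hw0, hz0, add_zero]

/-- The permutation of `Fin (k+1)` sending `i` to `last` and `i.succAbove a` to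
`castSucc (τ a)`. -/
def buildPerm {k : ℕ} (i : Fin (k + 1)) (τ : Equiv.Perm (Fin k)) : Equiv.Perm (Fin (k + 1)) :=
  (finSuccEquiv' i).trans ((Equiv.optionCongr τ).trans (finSuccEquiv' (Fin.last k)).symm)

lemma buildPerm_pivot {k : ℕ} (i : Fin (k + 1)) (τ : Equiv.Perm (Fin k)) :
    buildPerm i τ i = Fin.last k := by
  simp [buildPerm, finSuccEquiv'_at, finSuccEquiv'_symm_none]

lemma buildPerm_succAbove {k : ℕ} (i : Fin (k + 1)) (τ : Equiv.Perm (Fin k)) (a : Fin k) :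
    buildPerm i τ (i.succAbove a) = Fin.castSucc (τ a) := by
  simp [buildPerm, finSuccEquiv'_succAbove, finSuccEquiv'_symm_some]

/-- Any permutation fixing `i ↦ last` decomposes through a permutation of `Fin k`. -/
lemma exists_perm_decomp {k : ℕ} (σ : Equiv.Perm (Fin (k + 1))) (i : Fin (k + 1))
    (hi : σ i = Fin.last k) :
    ∃ τ : Equiv.Perm (Fin k), ∀ a, σ (i.succAbove a) = Fin.castSucc (τ a) := by
  set E : Option (Fin k) ≃ Option (Fin k) :=
    ((finSuccEquiv' i).symm.trans σ).trans (finSuccEquiv' (Fin.last k)) with hE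
  refine ⟨E.removeNone, fun a => ?_⟩
  have hEa : E (some a) = (finSuccEquiv' (Fin.last k)) (σ (i.succAbove a)) := by
    simp [hE, finSuccEquiv'_succAbove]
  have hne : E (some a) ≠ none := by
    rw [hEa]
    intro hc
    have h3 : σ (i.succAbove a) = Fin.last k :=
      (finSuccEquiv' (Fin.last k)).injective (hc.trans (finSuccEquiv'_at (Fin.last k)).symm)
    exact Fin.succAbove_ne i a (σ.injective (h3.trans hi.symm))
  obtain ⟨b, hb⟩ := Option.ne_none_iff_exists'.mp hne
  have h1 : some (E.removeNone a) = E (some a) := Equiv.removeNone_some E ⟨b, hb⟩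
  have h2 : σ (i.succAbove a) = (finSuccEquiv' (Fin.last k)).symm (some (E.removeNone a)) := by
    rw [h1, hEa, Equiv.symm_apply_apply]
  rw [finSuccEquiv'_symm_some, Fin.succAbove_last] at h2
  exact h2

lemma key_lemma (k : ℕ)
    (W : Matrix (Fin (k + 1)) (Fin k) (WithBot (ℝ ×ₗ K₀)))
    (hW : ∀ i j (w : ℝ ×ₗ K₀), W i j = ↑w → (ofLex w).1 = 0)
    (f : Fin (k + 1) → WithBot (ℝ ×ₗ K₀))
    (hWhat : ∀ i : Fin (k + 1),
      TropNonsingular (Matrix.of fun a b => W (i.succAbove a) b) ∨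
        tper (Matrix.of fun a b => W (i.succAbove a) b) = ⊥)
    (hbot : tper (Matrix.of fun i => Fin.snoc (W i) (f i)) ≠ ⊥)
    (σ : Equiv.Perm (Fin (k + 1)))
    (hσ : ∑ j, (Matrix.of fun i => Fin.snoc (W i) (f i)) j (σ j)
        = tper (Matrix.of fun i => Fin.snoc (W i) (f i))) :
    ∃ (w z : ℝ ×ₗ K₀) (τ : Equiv.Perm (Fin k)),
      f (σ.symm (Fin.last k)) = ↑w ∧
      (∀ a, σ ((σ.symm (Fin.last k)).succAbove a) = Fin.castSucc (τ a)) ∧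
      (∑ a, W ((σ.symm (Fin.last k)).succAbove a) (τ a)
          = tper (Matrix.of fun a b => W ((σ.symm (Fin.last k)).succAbove a) b)) ∧
      tper (Matrix.of fun a b => W ((σ.symm (Fin.last k)).succAbove a) b) = ↑z ∧
      (ofLex z).1 = 0 ∧
      tper (Matrix.of fun i => Fin.snoc (W i) (f i)) = ↑(w + z) := by
  classical
  set M := (Matrix.of fun i => Fin.snoc (W i) (f i)) with hM
  set i := σ.symm (Fin.last k) with hidef
  have hi : σ i = Fin.last k := σ.apply_symm_apply _
  obtain ⟨τ, hτ⟩ := exists_perm_decomp σ i hi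
  set S := ∑ a, W (i.succAbove a) (τ a) with hS
  have hdec : ∑ j, M j (σ j) = f i + S := by
    rw [Fin.sum_univ_succAbove (fun j => M j (σ j)) i]
    congr 1
    · rw [hi]
      simp [hM]
    · refine Finset.sum_congr rfl fun a _ => ?_
      rw [hτ a]
      simp [hM]
  have hfS : f i + S = tper M := hdec ▸ hσ
  have hfne : f i ≠ ⊥ := by
    intro h
    rw [h, WithBot.bot_add] at hfS
    exact hbot hfS.symm
  obtain ⟨w, hw⟩ := WithBot.ne_bot_iff_exists.mp hfne
  have hSne : S ≠ ⊥ := by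
    intro h
    rw [h, WithBot.add_bot] at hfS
    exact hbot hfS.symm
  have hSle : S ≤ tper (Matrix.of fun a b => W (i.succAbove a) b) :=
    Finset.le_sup (f := fun τ' : Equiv.Perm (Fin k) =>
      ∑ a, (Matrix.of fun a b => W (i.succAbove a) b) a (τ' a)) (Finset.mem_univ τ)
  have hWine : tper (Matrix.of fun a b => W (i.succAbove a) b) ≠ ⊥ := by
    intro h
    exact hSne (le_bot_iff.mp (h ▸ hSle))
  obtain ⟨-, τ₀, hτ₀, -⟩ := (hWhat i).resolve_right hWine
  have hb : f i + tper (Matrix.of fun a b => W (i.succAbove a) b) ≤ tper M := by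
    rw [← hτ₀]
    have hd : ∑ j, M j (buildPerm i τ₀ j)
        = f i + ∑ a, (Matrix.of fun a b => W (i.succAbove a) b) a (τ₀ a) := by
      rw [Fin.sum_univ_succAbove (fun j => M j (buildPerm i τ₀ j)) i]
      congr 1
      · rw [buildPerm_pivot]
        simp [hM]
      · refine Finset.sum_congr rfl fun a _ => ?_
        rw [buildPerm_succAbove]
        simp [hM]
    calc f i + ∑ a, (Matrix.of fun a b => W (i.succAbove a) b) a (τ₀ a)
        = ∑ j, M j (buildPerm i τ₀ j) := hd.symm
      _ ≤ tper M := Finset.le_sup (f := fun σ' : Equiv.Perm (Fin (k + 1)) =>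
        ∑ j, M j (σ' j)) (Finset.mem_univ (buildPerm i τ₀))
  have heq : f i + S = f i + tper (Matrix.of fun a b => W (i.succAbove a) b) :=
    le_antisymm (add_le_add_right hSle _) (by rw [hfS]; exact hb)
  have hScancel : S = tper (Matrix.of fun a b => W (i.succAbove a) b) := by
    rw [← hw] at heq
    exact WithBot.add_left_cancel WithBot.coe_ne_bot heq
  rcases layer_sum Finset.univ (fun a => W (i.succAbove a) (τ a))
      (fun a _ w' hw' => hW _ _ _ hw') with hB | ⟨z, hz, hz0⟩
  · exact absurd hB hSne
  · refine ⟨w, z, τ, hw.symm, hτ, by rw [← hS]; exact hScancel,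
      by rw [← hScancel, hS]; exact hz, hz0, ?_⟩
    rw [← hfS, ← hw, hS, hz, ← WithBot.coe_add]

/-- Over `G' := ℝ ×ₗ K₀`, let `W` be a `(k+1) × k` matrix all of whose
non-`⊥` entries have layer `0`, and let `f` be a column whose non-`⊥` values have pairwise
distinct layers.  If every matrix `W_î` (`W` with row `i` deleted) is tropically nonsingular
or has tropical permanent `⊥`, then the bordered matrix `M = (W | f)` is tropically
nonsingular or has tropical permanent `⊥`. -/
theorem bordered_matrix_tropically_generic (k : ℕ)
    (W : Matrix (Fin (k + 1)) (Fin k) (WithBot (ℝ ×ₗ K₀)))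
    (hW : ∀ i j (w : ℝ ×ₗ K₀), W i j = ↑w → (ofLex w).1 = 0)
    (f : Fin (k + 1) → WithBot (ℝ ×ₗ K₀))
    (hf : ∀ i i' : Fin (k + 1), i ≠ i' → ∀ w w' : ℝ ×ₗ K₀,
      f i = ↑w → f i' = ↑w' → (ofLex w).1 ≠ (ofLex w').1)
    (hWhat : ∀ i : Fin (k + 1),
      TropNonsingular (Matrix.of fun a b => W (i.succAbove a) b) ∨
        tper (Matrix.of fun a b => W (i.succAbove a) b) = ⊥) :
    TropNonsingular (Matrix.of fun i => Fin.snoc (W i) (f i)) ∨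
      tper (Matrix.of fun i => Fin.snoc (W i) (f i)) = ⊥ := by
  classical
  by_cases hbot : tper (Matrix.of fun i => Fin.snoc (W i) (f i)) = ⊥
  · exact Or.inr hbot
  refine Or.inl ⟨hbot, ?_⟩
  obtain ⟨σ₀, -, h₀⟩ := Finset.exists_mem_eq_sup Finset.univ Finset.univ_nonempty
    (fun σ : Equiv.Perm (Fin (k + 1)) =>
      ∑ j, (Matrix.of fun i => Fin.snoc (W i) (f i)) j (σ j))
  refine ⟨σ₀, h₀.symm, fun σ hσ => ?_⟩
  obtain ⟨w, z, τ, hw, hτ, hsum, hz, hz0, hMz⟩ :=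
    key_lemma k W hW f hWhat hbot σ hσ
  obtain ⟨w₀, z₀, τ₀, hw₀, hτ₀, hsum₀, hz₀, hz₀0, hMz₀⟩ :=
    key_lemma k W hW f hWhat hbot σ₀ h₀.symm
  have hi : σ.symm (Fin.last k) = σ₀.symm (Fin.last k) := by
    by_contra hne
    refine hf _ _ hne w w₀ hw hw₀ ?_
    have hcoe : w + z = w₀ + z₀ := WithBot.coe_inj.mp (hMz.symm.trans hMz₀)
    have h1 : (ofLex w).1 + (ofLex z).1 = (ofLex w₀).1 + (ofLex z₀).1 :=
      congrArg (fun x => (ofLex x).1) hcoe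
    rwa [hz0, hz₀0, add_zero, add_zero] at h1
  have hnons : TropNonsingular
      (Matrix.of fun a b => W ((σ.symm (Fin.last k)).succAbove a) b) :=
    (hWhat _).resolve_right (by rw [hz]; exact WithBot.coe_ne_bot)
  obtain ⟨-, τu, -, huniq⟩ := hnons
  have e1 : τ = τu := huniq τ hsum
  have e2 : τ₀ = τu := huniq τ₀ (by rw [hi]; exact hsum₀)
  refine Equiv.ext fun j => ?_
  rcases eq_or_ne j (σ.symm (Fin.last k)) with rfl | hne
  · rw [σ.apply_symm_apply, hi, σ₀.apply_symm_apply]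
  · obtain ⟨a, ha⟩ := Fin.exists_succAbove_eq hne
    rw [← ha, hτ a, e1, ← e2, ← hτ₀ a, hi]

end
end
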